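/- Let Σ and Σ' be two odd-block elements built from mutually orthogonal data (a unit vector v with k hyperbolic pairs, and a unit vector v' with ℓ hyperbolic pairs). Then the even element P := Σ * Σ' satisfies P * star P = 1, and P * ι u * star P = −ι u for every u in the ℂ-span of {v, e₁, f₁, …, e_k, f_k} ∪ {v', e'₁, f'₁, …, e'_ℓ, f'_ℓ}, while P * ι u * star P = ι u for every vector u orthogonal to all of these vectors. (Thus the even product of two odd-block elements acts by −Id exactly on the two blocks.) -/
import Mathlib

open CliffordAlgebra QuadraticMap

namespace SigmaOdd

variable {V : Type*} [AddCommGroup V] [Module ℂ V] (Q : QuadraticForm ℂ V)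

lemma anticomm {a b : V} (h : polar Q a b = 0) :
    ι Q a * ι Q b = -(ι Q b * ι Q a) := by
  have := ι_mul_ι_add_swap (Q := Q) a b
  rw [h, map_zero] at this
  exact eq_neg_of_add_eq_zero_left this

/-- The block factor. -/
noncomputable def A (a b : V) : CliffordAlgebra Q := 1 - ι Q a * ι Q b

lemma x_sq {a b : V} (hQa : Q a = 0) (hab : polar Q a b = 2) :
    (ι Q a * ι Q b) * (ι Q a * ι Q b) = algebraMap ℂ _ 2 * (ι Q a * ι Q b) := by
  have h1 : ι Q b * ι Q a = algebraMap ℂ _ 2 - ι Q a * ι Q b := by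
    rw [← hab, ← polar_comm]
    exact ι_mul_ι_comm b a
  have h2 : ι Q a * ι Q a = 0 := by rw [ι_sq_scalar, hQa, map_zero]
  calc (ι Q a * ι Q b) * (ι Q a * ι Q b)
      = ι Q a * (ι Q b * ι Q a) * ι Q b := by noncomm_ring
    _ = ι Q a * (algebraMap ℂ _ 2 - ι Q a * ι Q b) * ι Q b := by rw [h1]
    _ = algebraMap ℂ _ 2 * (ι Q a * ι Q b) - (ι Q a * ι Q a) * (ι Q b * ι Q b) := by
        rw [mul_sub, sub_mul,
          show ι Q a * algebraMap ℂ (CliffordAlgebra Q) 2 = algebraMap ℂ _ 2 * ι Q a from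
            (Algebra.commutes _ _).symm]
        noncomm_ring
    _ = algebraMap ℂ _ 2 * (ι Q a * ι Q b) := by rw [h2]; simp

lemma A_sq {a b : V} (hQa : Q a = 0) (hab : polar Q a b = 2) :
    A Q a b * A Q a b = 1 := by
  have := x_sq Q hQa hab
  unfold A
  rw [sub_mul, mul_sub, mul_sub, this]
  have h2 : (algebraMap ℂ (CliffordAlgebra Q)) 2 = 1 + 1 := by
    rw [map_ofNat]; norm_num
  rw [h2]
  noncomm_ring

lemma commute_A {a b u : V} (ha : polar Q u a = 0) (hb : polar Q u b = 0) :
    Commute (A Q a b) (ι Q u) := by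
  unfold A
  have h1 : ι Q u * ι Q a = -(ι Q a * ι Q u) := anticomm Q ha
  have h2 : ι Q u * ι Q b = -(ι Q b * ι Q u) := anticomm Q hb
  have : (ι Q a * ι Q b) * ι Q u = ι Q u * (ι Q a * ι Q b) := by
    calc (ι Q a * ι Q b) * ι Q u = ι Q a * (ι Q b * ι Q u) := by noncomm_ring
      _ = ι Q a * (-(ι Q u * ι Q b)) := by rw [← neg_eq_iff_eq_neg.mpr h2]
      _ = -((ι Q a * ι Q u) * ι Q b) := by noncomm_ring
      _ = -((-(ι Q u * ι Q a)) * ι Q b) := by rw [← neg_eq_iff_eq_neg.mpr h1]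
      _ = ι Q u * (ι Q a * ι Q b) := by noncomm_ring
  unfold Commute SemiconjBy
  rw [sub_mul, mul_sub, this, one_mul, mul_one]

lemma A_anticomm_a {a b : V} (hQa : Q a = 0) (hab : polar Q a b = 2) :
    A Q a b * ι Q a = -(ι Q a * A Q a b) := by
  have h1 : ι Q b * ι Q a = algebraMap ℂ _ 2 - ι Q a * ι Q b := by
    rw [← hab, ← polar_comm]; exact ι_mul_ι_comm b a
  have h2 : ι Q a * ι Q a = 0 := by rw [ι_sq_scalar, hQa, map_zero]
  have hx : (ι Q a * ι Q b) * ι Q a = algebraMap ℂ _ 2 * ι Q a := by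
    calc (ι Q a * ι Q b) * ι Q a = ι Q a * (ι Q b * ι Q a) := by noncomm_ring
      _ = ι Q a * (algebraMap ℂ _ 2 - ι Q a * ι Q b) := by rw [h1]
      _ = algebraMap ℂ _ 2 * ι Q a - (ι Q a * ι Q a) * ι Q b := by
          rw [mul_sub,
            show ι Q a * algebraMap ℂ (CliffordAlgebra Q) 2 = algebraMap ℂ _ 2 * ι Q a from
              (Algebra.commutes _ _).symm, ← mul_assoc]
      _ = algebraMap ℂ _ 2 * ι Q a := by rw [h2]; simp
  have hy : ι Q a * (ι Q a * ι Q b) = 0 := by rw [← mul_assoc, h2, zero_mul]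
  unfold A
  rw [sub_mul, mul_sub, hx, hy, one_mul, mul_one]
  have h2' : (algebraMap ℂ (CliffordAlgebra Q)) 2 = 1 + 1 := by rw [map_ofNat]; norm_num
  rw [h2']
  noncomm_ring

lemma A_anticomm_b {a b : V} (hQb : Q b = 0) (hab : polar Q a b = 2) :
    A Q a b * ι Q b = -(ι Q b * A Q a b) := by
  have h1 : ι Q b * ι Q a = algebraMap ℂ _ 2 - ι Q a * ι Q b := by
    rw [← hab, ← polar_comm]; exact ι_mul_ι_comm b a
  have h2 : ι Q b * ι Q b = 0 := by rw [ι_sq_scalar, hQb, map_zero]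
  have hx : (ι Q a * ι Q b) * ι Q b = 0 := by rw [mul_assoc, h2, mul_zero]
  have hy : ι Q b * (ι Q a * ι Q b) = algebraMap ℂ _ 2 * ι Q b := by
    calc ι Q b * (ι Q a * ι Q b) = (ι Q b * ι Q a) * ι Q b := by noncomm_ring
      _ = (algebraMap ℂ _ 2 - ι Q a * ι Q b) * ι Q b := by rw [h1]
      _ = algebraMap ℂ _ 2 * ι Q b - ι Q a * (ι Q b * ι Q b) := by rw [sub_mul]; noncomm_ring
      _ = algebraMap ℂ _ 2 * ι Q b := by rw [h2]; simp
  unfold A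
  rw [sub_mul, mul_sub, hx, hy, one_mul, mul_one]
  have h2' : (algebraMap ℂ (CliffordAlgebra Q)) 2 = 1 + 1 := by rw [map_ofNat]; norm_num
  rw [h2']
  noncomm_ring

lemma star_A {a b : V} (hab : polar Q a b = 2) :
    star (A Q a b) = -(A Q a b) := by
  have h1 : ι Q b * ι Q a = algebraMap ℂ _ 2 - ι Q a * ι Q b := by
    rw [← hab, ← polar_comm]; exact ι_mul_ι_comm b a
  unfold A
  rw [star_sub, star_one, star_mul, star_ι, star_ι, neg_mul_neg, h1]
  have h2' : (algebraMap ℂ (CliffordAlgebra Q)) 2 = 1 + 1 := by rw [map_ofNat]; norm_num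
  rw [h2']
  noncomm_ring

end SigmaOdd

namespace SigmaOdd

variable {V : Type*} [AddCommGroup V] [Module ℂ V] (Q : QuadraticForm ℂ V)

lemma commute_B (k : ℕ) : ∀ (e f : Fin k → V) (u : V),
    (∀ j, polar Q u (e j) = 0) → (∀ j, polar Q u (f j) = 0) →
    Commute (List.ofFn fun j => A Q (e j) (f j)).prod (ι Q u) := by
  induction k with
  | zero => intro e f u he hf; simp [Commute.one_left]
  | succ k ih =>
    intro e f u he hf
    rw [List.ofFn_succ, List.prod_cons]
    exact (commute_A Q (he 0) (hf 0)).mul_left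
      (ih (fun j => e j.succ) (fun j => f j.succ) u (fun j => he j.succ) (fun j => hf j.succ))

/-- tail commutes with the head factor, under the orthogonality hypotheses. -/
lemma tail_commute (k : ℕ) (e f : Fin (k+1) → V)
    (horth : ∀ i j, i ≠ j →
      polar Q (e i) (e j) = 0 ∧ polar Q (e i) (f j) = 0 ∧ polar Q (f i) (f j) = 0) :
    Commute (List.ofFn fun j : Fin k => A Q (e j.succ) (f j.succ)).prod (A Q (e 0) (f 0)) := by
  have he : Commute (List.ofFn fun j : Fin k => A Q (e j.succ) (f j.succ)).prod (ι Q (e 0)) :=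
    commute_B Q k _ _ _
      (fun j => (horth 0 j.succ (Fin.succ_ne_zero j).symm).1)
      (fun j => (horth 0 j.succ (Fin.succ_ne_zero j).symm).2.1)
  have hf : Commute (List.ofFn fun j : Fin k => A Q (e j.succ) (f j.succ)).prod (ι Q (f 0)) :=
    commute_B Q k _ _ _
      (fun j => by rw [polar_comm]; exact (horth j.succ 0 (Fin.succ_ne_zero j)).2.1)
      (fun j => (horth 0 j.succ (Fin.succ_ne_zero j).symm).2.2)
  have : Commute (List.ofFn fun j : Fin k => A Q (e j.succ) (f j.succ)).prod
      (ι Q (e 0) * ι Q (f 0)) := he.mul_right hf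
  simpa [A] using (Commute.one_right _).sub_right this

lemma B_sq (k : ℕ) : ∀ (e f : Fin k → V),
    (∀ j, Q (e j) = 0) → (∀ j, polar Q (e j) (f j) = 2) →
    (∀ i j, i ≠ j →
      polar Q (e i) (e j) = 0 ∧ polar Q (e i) (f j) = 0 ∧ polar Q (f i) (f j) = 0) →
    (List.ofFn fun j => A Q (e j) (f j)).prod * (List.ofFn fun j => A Q (e j) (f j)).prod
      = 1 := by
  induction k with
  | zero => intro e f _ _ _; simp
  | succ k ih =>
    intro e f hQe hef horth
    rw [List.ofFn_succ, List.prod_cons]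
    have hc := (tail_commute Q k e f horth).eq
    set T := (List.ofFn fun j : Fin k => A Q (e j.succ) (f j.succ)).prod with hT
    calc A Q (e 0) (f 0) * T * (A Q (e 0) (f 0) * T)
        = A Q (e 0) (f 0) * (T * A Q (e 0) (f 0)) * T := by noncomm_ring
      _ = A Q (e 0) (f 0) * (A Q (e 0) (f 0) * T) * T := by rw [hc]
      _ = (A Q (e 0) (f 0) * A Q (e 0) (f 0)) * (T * T) := by noncomm_ring
      _ = 1 := by
          rw [A_sq Q (hQe 0) (hef 0),
            ih _ _ (fun j => hQe j.succ) (fun j => hef j.succ)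
              (fun i j hij => horth i.succ j.succ (fun h => hij (Fin.succ_injective _ h))),
            one_mul]

lemma star_B (k : ℕ) : ∀ (e f : Fin k → V),
    (∀ j, polar Q (e j) (f j) = 2) →
    (∀ i j, i ≠ j →
      polar Q (e i) (e j) = 0 ∧ polar Q (e i) (f j) = 0 ∧ polar Q (f i) (f j) = 0) →
    star (List.ofFn fun j => A Q (e j) (f j)).prod
      = ((-1 : ℂ)^k) • (List.ofFn fun j => A Q (e j) (f j)).prod := by
  induction k with
  | zero => intro e f _ _; simp
  | succ k ih =>
    intro e f hef horth
    rw [List.ofFn_succ, List.prod_cons, star_mul,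
      ih _ _ (fun j => hef j.succ)
        (fun i j hij => horth i.succ j.succ (fun h => hij (Fin.succ_injective _ h))),
      star_A Q (hef 0)]
    rw [smul_mul_assoc, mul_neg, (tail_commute Q k e f horth).eq]
    rw [smul_neg, pow_succ, mul_neg_one, neg_smul]

lemma B_anticomm_e (k : ℕ) : ∀ (e f : Fin k → V) (j₀ : Fin k),
    (∀ j, Q (e j) = 0) → (∀ j, polar Q (e j) (f j) = 2) →
    (∀ i j, i ≠ j →
      polar Q (e i) (e j) = 0 ∧ polar Q (e i) (f j) = 0 ∧ polar Q (f i) (f j) = 0) →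
    (List.ofFn fun j => A Q (e j) (f j)).prod * ι Q (e j₀)
      = -(ι Q (e j₀) * (List.ofFn fun j => A Q (e j) (f j)).prod) := by
  induction k with
  | zero => intro e f j₀; exact j₀.elim0
  | succ k ih =>
    intro e f j₀ hQe hef horth
    rw [List.ofFn_succ, List.prod_cons]
    set T := (List.ofFn fun j : Fin k => A Q (e j.succ) (f j.succ)).prod with hT
    induction j₀ using Fin.cases with
    | zero =>
      have hc : T * ι Q (e 0) = ι Q (e 0) * T :=
        (commute_B Q k _ _ _
          (fun j => (horth 0 j.succ (Fin.succ_ne_zero j).symm).1)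
          (fun j => (horth 0 j.succ (Fin.succ_ne_zero j).symm).2.1)).eq
      calc A Q (e 0) (f 0) * T * ι Q (e 0)
          = A Q (e 0) (f 0) * (T * ι Q (e 0)) := by noncomm_ring
        _ = A Q (e 0) (f 0) * (ι Q (e 0) * T) := by rw [hc]
        _ = (A Q (e 0) (f 0) * ι Q (e 0)) * T := by noncomm_ring
        _ = -(ι Q (e 0) * A Q (e 0) (f 0)) * T := by rw [A_anticomm_a Q (hQe 0) (hef 0)]
        _ = -(ι Q (e 0) * (A Q (e 0) (f 0) * T)) := by noncomm_ring
    | succ i =>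
      have hih := ih (fun j => e j.succ) (fun j => f j.succ) i
        (fun j => hQe j.succ) (fun j => hef j.succ)
        (fun i j hij => horth i.succ j.succ (fun h => hij (Fin.succ_injective _ h)))
      have hcA : Commute (A Q (e 0) (f 0)) (ι Q (e i.succ)) :=
        commute_A Q
          ((horth i.succ 0 (Fin.succ_ne_zero i)).1)
          ((horth i.succ 0 (Fin.succ_ne_zero i)).2.1)
      calc A Q (e 0) (f 0) * T * ι Q (e i.succ)
          = A Q (e 0) (f 0) * (T * ι Q (e i.succ)) := by noncomm_ring
        _ = A Q (e 0) (f 0) * (-(ι Q (e i.succ) * T)) := by rw [hih]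
        _ = -((A Q (e 0) (f 0) * ι Q (e i.succ)) * T) := by noncomm_ring
        _ = -((ι Q (e i.succ) * A Q (e 0) (f 0)) * T) := by rw [hcA.eq]
        _ = -(ι Q (e i.succ) * (A Q (e 0) (f 0) * T)) := by noncomm_ring

lemma B_anticomm_f (k : ℕ) : ∀ (e f : Fin k → V) (j₀ : Fin k),
    (∀ j, Q (f j) = 0) → (∀ j, polar Q (e j) (f j) = 2) →
    (∀ i j, i ≠ j →
      polar Q (e i) (e j) = 0 ∧ polar Q (e i) (f j) = 0 ∧ polar Q (f i) (f j) = 0) →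
    (List.ofFn fun j => A Q (e j) (f j)).prod * ι Q (f j₀)
      = -(ι Q (f j₀) * (List.ofFn fun j => A Q (e j) (f j)).prod) := by
  induction k with
  | zero => intro e f j₀; exact j₀.elim0
  | succ k ih =>
    intro e f j₀ hQf hef horth
    rw [List.ofFn_succ, List.prod_cons]
    set T := (List.ofFn fun j : Fin k => A Q (e j.succ) (f j.succ)).prod with hT
    induction j₀ using Fin.cases with
    | zero =>
      have hc : T * ι Q (f 0) = ι Q (f 0) * T :=
        (commute_B Q k _ _ _
          (fun j => by rw [polar_comm]; exact (horth j.succ 0 (Fin.succ_ne_zero j)).2.1)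
          (fun j => (horth 0 j.succ (Fin.succ_ne_zero j).symm).2.2)).eq
      calc A Q (e 0) (f 0) * T * ι Q (f 0)
          = A Q (e 0) (f 0) * (T * ι Q (f 0)) := by noncomm_ring
        _ = A Q (e 0) (f 0) * (ι Q (f 0) * T) := by rw [hc]
        _ = (A Q (e 0) (f 0) * ι Q (f 0)) * T := by noncomm_ring
        _ = -(ι Q (f 0) * A Q (e 0) (f 0)) * T := by rw [A_anticomm_b Q (hQf 0) (hef 0)]
        _ = -(ι Q (f 0) * (A Q (e 0) (f 0) * T)) := by noncomm_ring
    | succ i =>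
      have hih := ih (fun j => e j.succ) (fun j => f j.succ) i
        (fun j => hQf j.succ) (fun j => hef j.succ)
        (fun i j hij => horth i.succ j.succ (fun h => hij (Fin.succ_injective _ h)))
      have hcA : Commute (A Q (e 0) (f 0)) (ι Q (f i.succ)) :=
        commute_A Q
          (by rw [polar_comm]; exact (horth 0 i.succ (Fin.succ_ne_zero i).symm).2.1)
          ((horth i.succ 0 (Fin.succ_ne_zero i)).2.2)
      calc A Q (e 0) (f 0) * T * ι Q (f i.succ)
          = A Q (e 0) (f 0) * (T * ι Q (f i.succ)) := by noncomm_ring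
        _ = A Q (e 0) (f 0) * (-(ι Q (f i.succ) * T)) := by rw [hih]
        _ = -((A Q (e 0) (f 0) * ι Q (f i.succ)) * T) := by noncomm_ring
        _ = -((ι Q (f i.succ) * A Q (e 0) (f 0)) * T) := by rw [hcA.eq]
        _ = -(ι Q (f i.succ) * (A Q (e 0) (f 0) * T)) := by noncomm_ring

end SigmaOdd

namespace SigmaOdd

variable {V : Type*} [AddCommGroup V] [Module ℂ V] (Q : QuadraticForm ℂ V)

lemma block_props (k : ℕ) (e f : Fin k → V) (v : V)
    (hQe : ∀ j, Q (e j) = 0) (hQf : ∀ j, Q (f j) = 0)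
    (hef : ∀ j, polar Q (e j) (f j) = 2)
    (horth : ∀ i j, i ≠ j →
      polar Q (e i) (e j) = 0 ∧ polar Q (e i) (f j) = 0 ∧ polar Q (f i) (f j) = 0)
    (hv : Q v = 1)
    (hve : ∀ j, polar Q v (e j) = 0) (hvf : ∀ j, polar Q v (f j) = 0)
    (S : CliffordAlgebra Q)
    (hS : S = (Complex.I ^ k) • (ι Q v * (List.ofFn fun j => A Q (e j) (f j)).prod)) :
    star S = ((-1 : ℂ)^(k+1)) • S ∧
    S * S = ((-1 : ℂ)^k) • 1 ∧
    Commute S (ι Q v) ∧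
    (∀ j, Commute S (ι Q (e j))) ∧ (∀ j, Commute S (ι Q (f j))) ∧
    (∀ u, polar Q u v = 0 → (∀ j, polar Q u (e j) = 0) → (∀ j, polar Q u (f j) = 0) →
      S * ι Q u = -(ι Q u * S)) := by
  set B := (List.ofFn fun j => A Q (e j) (f j)).prod with hB
  have hBB : B * B = 1 := B_sq Q k e f hQe hef horth
  have hstarB : star B = ((-1 : ℂ)^k) • B := star_B Q k e f hef horth
  have hBv : B * ι Q v = ι Q v * B := (commute_B Q k e f v hve hvf).eq
  have hvv : ι Q v * ι Q v = 1 := by rw [ι_sq_scalar, hv, map_one]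
  refine ⟨?_, ?_, ?_, ?_, ?_, ?_⟩
  · rw [hS, CliffordAlgebra.star_smul, star_mul, hstarB, star_ι, smul_mul_assoc, mul_neg, hBv]
    simp only [smul_neg, smul_smul]
    rw [← neg_smul]
    congr 1
    ring
  · rw [hS, smul_mul_assoc, mul_smul_comm, smul_smul]
    have hX : ι Q v * B * (ι Q v * B) = 1 := by
      calc ι Q v * B * (ι Q v * B) = ι Q v * (B * ι Q v) * B := by noncomm_ring
        _ = ι Q v * (ι Q v * B) * B := by rw [hBv]
        _ = (ι Q v * ι Q v) * (B * B) := by noncomm_ring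
        _ = 1 := by rw [hvv, hBB, one_mul]
    rw [hX]
    rw [← Complex.I_mul_I, mul_pow]
  · show S * ι Q v = ι Q v * S
    rw [hS, smul_mul_assoc, mul_smul_comm]
    congr 1
    calc ι Q v * B * ι Q v = ι Q v * (B * ι Q v) := by noncomm_ring
      _ = ι Q v * (ι Q v * B) := by rw [hBv]
  · intro j
    show S * ι Q (e j) = ι Q (e j) * S
    rw [hS, smul_mul_assoc, mul_smul_comm]
    congr 1
    have hanti : ι Q v * ι Q (e j) = -(ι Q (e j) * ι Q v) := anticomm Q (hve j)
    calc ι Q v * B * ι Q (e j) = ι Q v * (B * ι Q (e j)) := by noncomm_ring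
      _ = ι Q v * (-(ι Q (e j) * B)) := by rw [B_anticomm_e Q k e f j hQe hef horth]
      _ = -((ι Q v * ι Q (e j)) * B) := by noncomm_ring
      _ = -((-(ι Q (e j) * ι Q v)) * B) := by rw [hanti]
      _ = ι Q (e j) * (ι Q v * B) := by noncomm_ring
  · intro j
    show S * ι Q (f j) = ι Q (f j) * S
    rw [hS, smul_mul_assoc, mul_smul_comm]
    congr 1
    have hanti : ι Q v * ι Q (f j) = -(ι Q (f j) * ι Q v) := anticomm Q (hvf j)
    calc ι Q v * B * ι Q (f j) = ι Q v * (B * ι Q (f j)) := by noncomm_ring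
      _ = ι Q v * (-(ι Q (f j) * B)) := by rw [B_anticomm_f Q k e f j hQf hef horth]
      _ = -((ι Q v * ι Q (f j)) * B) := by noncomm_ring
      _ = -((-(ι Q (f j) * ι Q v)) * B) := by rw [hanti]
      _ = ι Q (f j) * (ι Q v * B) := by noncomm_ring
  · intro u huv hue huf
    rw [hS, smul_mul_assoc, mul_smul_comm, ← smul_neg]
    congr 1
    have hanti : ι Q v * ι Q u = -(ι Q u * ι Q v) :=
      anticomm Q (by rw [polar_comm]; exact huv)
    calc ι Q v * B * ι Q u = ι Q v * (B * ι Q u) := by noncomm_ring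
      _ = ι Q v * (ι Q u * B) := by rw [(commute_B Q k e f u hue huf).eq]
      _ = (ι Q v * ι Q u) * B := by noncomm_ring
      _ = (-(ι Q u * ι Q v)) * B := by rw [hanti]
      _ = -(ι Q u * (ι Q v * B)) := by noncomm_ring

end SigmaOdd

open SigmaOdd

/-- Two odd-block elements `Σ = i^k • (ι v * ∏ j (1 - ι (e j) * ι (f j)))` and
`Σ' = i^ℓ • (ι v' * ∏ j (1 - ι (e' j) * ι (f' j)))` built from mutually orthogonal
data: the even element `P = Σ * Σ'` satisfies `P * star P = 1`, acts by `-1` on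
`ι u` for every `u` in the `ℂ`-span of the vectors of the two blocks, and fixes
`ι u` for every vector `u` orthogonal to all of them. -/
theorem sigma_odd_prod_action {V : Type*} [AddCommGroup V] [Module ℂ V]
    (Q : QuadraticForm ℂ V) (k l : ℕ)
    (e f : Fin k → V) (v : V) (e' f' : Fin l → V) (v' : V)
    -- first block
    (hQe : ∀ j, Q (e j) = 0) (hQf : ∀ j, Q (f j) = 0)
    (hef : ∀ j, polar Q (e j) (f j) = 2)
    (horth : ∀ i j, i ≠ j →
      polar Q (e i) (e j) = 0 ∧ polar Q (e i) (f j) = 0 ∧ polar Q (f i) (f j) = 0)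
    (hv : Q v = 1)
    (hve : ∀ j, polar Q v (e j) = 0) (hvf : ∀ j, polar Q v (f j) = 0)
    -- second block
    (hQe' : ∀ j, Q (e' j) = 0) (hQf' : ∀ j, Q (f' j) = 0)
    (hef' : ∀ j, polar Q (e' j) (f' j) = 2)
    (horth' : ∀ i j, i ≠ j →
      polar Q (e' i) (e' j) = 0 ∧ polar Q (e' i) (f' j) = 0 ∧
        polar Q (f' i) (f' j) = 0)
    (hv' : Q v' = 1)
    (hve' : ∀ j, polar Q v' (e' j) = 0) (hvf' : ∀ j, polar Q v' (f' j) = 0)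
    -- the two blocks are mutually orthogonal
    (hvv' : polar Q v v' = 0)
    (hcross₁ : ∀ j, polar Q v (e' j) = 0 ∧ polar Q v (f' j) = 0)
    (hcross₂ : ∀ i, polar Q (e i) v' = 0 ∧ polar Q (f i) v' = 0)
    (hcross₃ : ∀ i j, polar Q (e i) (e' j) = 0 ∧ polar Q (e i) (f' j) = 0 ∧
      polar Q (f i) (e' j) = 0 ∧ polar Q (f i) (f' j) = 0)
    (S S' : CliffordAlgebra Q)
    (hS : S = (Complex.I ^ k) •
      (ι Q v * (List.ofFn (fun j : Fin k => 1 - ι Q (e j) * ι Q (f j))).prod))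
    (hS' : S' = (Complex.I ^ l) •
      (ι Q v' * (List.ofFn (fun j : Fin l => 1 - ι Q (e' j) * ι Q (f' j))).prod)) :
    (S * S') * star (S * S') = 1 ∧
    (∀ u ∈ Submodule.span ℂ
        (({v} ∪ Set.range e ∪ Set.range f) ∪ ({v'} ∪ Set.range e' ∪ Set.range f')),
      (S * S') * ι Q u * star (S * S') = -(ι Q u)) ∧
    (∀ u : V, polar Q u v = 0 → polar Q u v' = 0 →
      (∀ j, polar Q u (e j) = 0) → (∀ j, polar Q u (f j) = 0) →
      (∀ j, polar Q u (e' j) = 0) → (∀ j, polar Q u (f' j) = 0) →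
      (S * S') * ι Q u * star (S * S') = ι Q u) := by
  obtain ⟨h1star, h1sq, h1v, h1e, h1f, h1anti⟩ :=
    block_props Q k e f v hQe hQf hef horth hv hve hvf S hS
  obtain ⟨h2star, h2sq, h2v, h2e, h2f, h2anti⟩ :=
    block_props Q l e' f' v' hQe' hQf' hef' horth' hv' hve' hvf' S' hS'
  have hkk : ((-1 : ℂ))^k * (-1)^k = 1 := by rw [← mul_pow]; norm_num
  have hll : ((-1 : ℂ))^l * (-1)^l = 1 := by rw [← mul_pow]; norm_num
  have hPstar : star (S * S') = ((-1 : ℂ)^(k+l)) • (S' * S) := by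
    rw [star_mul, h1star, h2star, smul_mul_assoc, mul_smul_comm, smul_smul]
    congr 1
    rw [pow_succ, pow_succ, pow_add]
    ring
  -- conjugation helpers
  have c1comm : ∀ u : V, S * ι Q u = ι Q u * S → S * ι Q u * S = ((-1 : ℂ)^k) • ι Q u := by
    intro u h
    rw [h, mul_assoc, h1sq, mul_smul_comm, mul_one]
  have c1anti : ∀ u : V, S * ι Q u = -(ι Q u * S) →
      S * ι Q u * S = (-((-1 : ℂ)^k)) • ι Q u := by
    intro u h
    rw [h, neg_mul, mul_assoc, h1sq, mul_smul_comm, mul_one]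
    simp [smul_neg, neg_smul]
  have c2comm : ∀ u : V, S' * ι Q u = ι Q u * S' →
      S' * ι Q u * S' = ((-1 : ℂ)^l) • ι Q u := by
    intro u h
    rw [h, mul_assoc, h2sq, mul_smul_comm, mul_one]
  have c2anti : ∀ u : V, S' * ι Q u = -(ι Q u * S') →
      S' * ι Q u * S' = (-((-1 : ℂ)^l)) • ι Q u := by
    intro u h
    rw [h, neg_mul, mul_assoc, h2sq, mul_smul_comm, mul_one]
    simp [smul_neg, neg_smul]
  have hact : ∀ (u : V) (s' s : ℂ), S' * ι Q u * S' = s' • ι Q u →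
      S * ι Q u * S = s • ι Q u →
      (S * S') * ι Q u * star (S * S') = (((-1 : ℂ)^(k+l)) * s' * s) • ι Q u := by
    intro u s' s h2 h1
    rw [hPstar, mul_smul_comm]
    have hmid : S * S' * ι Q u * (S' * S) = (s' * s) • ι Q u := by
      calc S * S' * ι Q u * (S' * S) = S * (S' * ι Q u * S') * S := by noncomm_ring
        _ = S * (s' • ι Q u) * S := by rw [h2]
        _ = s' • (S * ι Q u * S) := by rw [mul_smul_comm, smul_mul_assoc]
        _ = s' • (s • ι Q u) := by rw [h1]
        _ = (s' * s) • ι Q u := by rw [smul_smul]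
    rw [hmid, smul_smul, mul_assoc]
  have hs1 : ((-1 : ℂ)^(k+l)) * (-((-1 : ℂ)^l)) * ((-1 : ℂ)^k) = -1 := by
    rw [pow_add]
    linear_combination (-((-1 : ℂ)^l * (-1)^l)) * hkk - hll
  have hs2 : ((-1 : ℂ)^(k+l)) * ((-1 : ℂ)^l) * (-((-1 : ℂ)^k)) = -1 := by
    rw [pow_add]
    linear_combination (-((-1 : ℂ)^l * (-1)^l)) * hkk - hll
  have hs3 : ((-1 : ℂ)^(k+l)) * (-((-1 : ℂ)^l)) * (-((-1 : ℂ)^k)) = 1 := by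
    rw [pow_add]
    linear_combination ((-1 : ℂ)^l * (-1)^l) * hkk + hll
  have bump : ∀ (u : V) (s' s : ℂ), S' * ι Q u * S' = s' • ι Q u →
      S * ι Q u * S = s • ι Q u → (((-1 : ℂ)^(k+l)) * s' * s = -1) →
      (S * S') * ι Q u * star (S * S') = -(ι Q u) := by
    intro u s' s h2 h1 hval
    rw [hact u s' s h2 h1, hval, neg_one_smul]
  refine ⟨?_, ?_, ?_⟩
  · rw [hPstar, mul_smul_comm]
    have hmid : S * S' * (S' * S) = ((-1 : ℂ)^l * (-1 : ℂ)^k) • (1 : CliffordAlgebra Q) := by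
      calc S * S' * (S' * S) = S * (S' * S') * S := by noncomm_ring
        _ = S * (((-1 : ℂ)^l) • 1) * S := by rw [h2sq]
        _ = ((-1 : ℂ)^l) • (S * S) := by rw [mul_smul_comm, smul_mul_assoc, mul_one]
        _ = ((-1 : ℂ)^l) • (((-1 : ℂ)^k) • 1) := by rw [h1sq]
        _ = ((-1 : ℂ)^l * (-1 : ℂ)^k) • 1 := by rw [smul_smul]
    rw [hmid, smul_smul]
    have : ((-1 : ℂ)^(k+l)) * ((-1 : ℂ)^l * (-1 : ℂ)^k) = 1 := by
      rw [pow_add]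
      linear_combination ((-1 : ℂ)^l * (-1)^l) * hkk + hll
    rw [this, one_smul]
  · intro u hu
    induction hu using Submodule.span_induction with
    | mem x h =>
      rcases h with ((rfl | ⟨i, rfl⟩) | ⟨i, rfl⟩) | ((rfl | ⟨i, rfl⟩) | ⟨i, rfl⟩)
      · exact bump _ _ _
          (c2anti _ (h2anti _ hvv' (fun j => (hcross₁ j).1) (fun j => (hcross₁ j).2)))
          (c1comm _ h1v.eq) hs1
      · exact bump _ _ _
          (c2anti _ (h2anti _ (hcross₂ i).1
            (fun j => (hcross₃ i j).1) (fun j => (hcross₃ i j).2.1)))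
          (c1comm _ (h1e i).eq) hs1
      · exact bump _ _ _
          (c2anti _ (h2anti _ (hcross₂ i).2
            (fun j => (hcross₃ i j).2.2.1) (fun j => (hcross₃ i j).2.2.2)))
          (c1comm _ (h1f i).eq) hs1
      · exact bump _ _ _ (c2comm _ h2v.eq)
          (c1anti _ (h1anti _ (by rw [polar_comm]; exact hvv')
            (fun j => by rw [polar_comm]; exact (hcross₂ j).1)
            (fun j => by rw [polar_comm]; exact (hcross₂ j).2))) hs2
      · exact bump _ _ _ (c2comm _ (h2e i).eq)
          (c1anti _ (h1anti _ (by rw [polar_comm]; exact (hcross₁ i).1)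
            (fun j => by rw [polar_comm]; exact (hcross₃ j i).1)
            (fun j => by rw [polar_comm]; exact (hcross₃ j i).2.2.1))) hs2
      · exact bump _ _ _ (c2comm _ (h2f i).eq)
          (c1anti _ (h1anti _ (by rw [polar_comm]; exact (hcross₁ i).2)
            (fun j => by rw [polar_comm]; exact (hcross₃ j i).2.1)
            (fun j => by rw [polar_comm]; exact (hcross₃ j i).2.2.2))) hs2
    | zero => simp
    | add x y hx hy ihx ihy =>
      rw [map_add, mul_add, add_mul, ihx, ihy, neg_add]
    | smul a x hx ih =>
      rw [LinearMap.map_smul, mul_smul_comm, smul_mul_assoc, ih, smul_neg]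
  · intro u huv huv' hue huf hue' huf'
    have h := hact u (-((-1 : ℂ)^l)) (-((-1 : ℂ)^k))
      (c2anti _ (h2anti u huv' hue' huf')) (c1anti _ (h1anti u huv hue huf))
    rw [h, hs3, one_smul]
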